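/- arXiv:1807.01079 — 3 statements merged into one kernel-verified Lean document; each statement's English description precedes it below -/
import Mathlib

section
/- For a monotone (in the decision variables) constraint f(σ) ≥ θ, the naive propagator that fixes d to false, sets all other free variables to true, and removes false from the domain of d whenever the resulting value is below θ, is domain consistent: after propagation, for every remaining free variable v and each value b ∈ {⊥,⊤}, the partial assignment extended with v ↦ b can be completed to a full assignment satisfying f ≥ θ. -/
/-- Extend the partial assignment `σ'` (defined on `S`) with the values of `g`
on the free variables (those outside `S`). -/
def extend {ι : Type*} (S : Set ι) [DecidablePred (· ∈ S)] (σ' : ι → Bool)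
    (g : ι → Bool) : ι → Bool :=
  fun i => if i ∈ S then σ' i else g i

/-- The naive propagator for a monotone constraint `f σ ≥ θ` is domain
consistent: assuming a satisfying completion of `σ'` exists (equivalently, the
all-true completion satisfies the constraint), then for every free variable `v`
that was not pruned (i.e. setting `v` to false and all other free variables to
true still meets the threshold) and every value `b : Bool`, there is a
completion of `σ'` with `v ↦ b` that respects all prunings (every pruned free
variable is true) and satisfies `f ≥ θ`. -/
theorem naive_propagator_domain_consistent {ι : Type*} [DecidableEq ι]
    (S : Set ι) [DecidablePred (· ∈ S)] (σ' : ι → Bool)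
    (f : (ι → Bool) → ℝ) (hf : Monotone f) (θ : ℝ)
    (hfeas : θ ≤ f (extend S σ' (fun _ => true))) :
    ∀ v ∉ S,
      θ ≤ f (extend S σ' (fun i => if i = v then false else true)) →
      ∀ b : Bool, ∃ τ : ι → Bool,
        (∀ i ∈ S, τ i = σ' i) ∧
        τ v = b ∧
        (∀ d ∉ S,
          f (extend S σ' (fun i => if i = d then false else true)) < θ →
            τ d = true) ∧
        θ ≤ f τ := by
  intro v hv hnp b
  refine ⟨extend S σ' (fun i => if i = v then b else true), ?_, ?_, ?_, ?_⟩
  · intro i hi; simp [extend, hi]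
  · simp [extend, hv]
  · intro d hd hlt
    simp only [extend, if_neg hd]
    by_cases hdv : d = v
    · subst hdv
      exact absurd hlt (not_lt.2 hnp)
    · simp [hdv]
  · cases b with
    | true =>
        refine le_trans hfeas (hf ?_)
        intro i; simp only [extend]
        split
        · exact le_refl _
        · split <;> simp
    | false =>
        refine le_trans hnp (hf ?_)
        intro i; simp only [extend]
        split
        · exact le_refl _
        · split <;> simp
end

section
/- If each stochastic variable t_i is independently true with probability p_i, then the OBDD evaluation v(root) equals the probability P(φ = ⊤ | σ), i.e., the measure of the set of samples of (t_1,…,t_k) making φ true under strategy σ. -/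
/-- A binary decision diagram (as a tree) over stochastic variables `S` and
decision variables `D`: leaves carry Boolean constants, internal nodes test one
variable; the hi-child corresponds to the tested variable being true. -/
inductive DT (S D : Type) : Type
  | leaf (b : Bool) : DT S D
  | snode (i : S) (hi lo : DT S D) : DT S D
  | dnode (j : D) (hi lo : DT S D) : DT S D

/-- The Boolean function `φ(τ, σ)` represented by the diagram, where `τ` is a
sample of the stochastic variables and `σ` the strategy fixing the decisions. -/
def DT.bval {S D : Type} (σ : D → Bool) (τ : S → Bool) : DT S D → Bool
  | .leaf b => b
  | .snode i hi lo => if τ i then hi.bval σ τ else lo.bval σ τ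
  | .dnode j hi lo => if σ j then hi.bval σ τ else lo.bval σ τ

/-- OBDD evaluation with stochastic weights `p i` and 0/1 decision weights
according to `σ`: `v(0)=0`, `v(1)=1`, stochastic node value
`p_i·v(hi)+(1-p_i)·v(lo)`, decision node value `v(hi)` if `σ` sets it true,
else `v(lo)`. -/
def DT.val {S D : Type} (σ : D → Bool) (p : S → ℝ) : DT S D → ℝ
  | .leaf b => if b then 1 else 0
  | .snode i hi lo => p i * hi.val σ p + (1 - p i) * lo.val σ p
  | .dnode j hi lo => if σ j then hi.val σ p else lo.val σ p

/-- The stochastic variables tested in the diagram. -/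
def DT.svars {S D : Type} [DecidableEq S] : DT S D → Finset S
  | .leaf _ => ∅
  | .snode i hi lo => insert i (hi.svars ∪ lo.svars)
  | .dnode _ hi lo => hi.svars ∪ lo.svars

/-- Read-once property of an OBDD: no stochastic variable is tested twice on
any root-to-leaf path. -/
def DT.readOnce {S D : Type} [DecidableEq S] : DT S D → Prop
  | .leaf _ => True
  | .snode i hi lo => i ∉ hi.svars ∧ i ∉ lo.svars ∧ hi.readOnce ∧ lo.readOnce
  | .dnode _ hi lo => hi.readOnce ∧ lo.readOnce


lemma DT.bval_eq_of_agree {S D : Type} [DecidableEq S] (σ : D → Bool)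
    (T : DT S D) : ∀ {τ τ' : S → Bool}, (∀ i ∈ T.svars, τ i = τ' i) →
    T.bval σ τ = T.bval σ τ' := by
  induction T with
  | leaf b => intro τ τ' _; rfl
  | snode i hi lo ihh ihl =>
    intro τ τ' h
    have hi' : τ i = τ' i := h i (by simp [DT.svars])
    simp only [DT.bval, hi']
    rcases τ' i with _ | _
    · simpa using ihl fun j hj => h j (by simp [DT.svars, hj])
    · simpa using ihh fun j hj => h j (by simp [DT.svars, hj])
  | dnode j hi lo ihh ihl =>
    intro τ τ' h
    simp only [DT.bval]
    rcases σ j with _ | _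
    · simpa using ihl fun j hj => h j (by simp [DT.svars, hj])
    · simpa using ihh fun j hj => h j (by simp [DT.svars, hj])

lemma DT.split_sum {S D : Type} [Fintype S] [DecidableEq S] (σ : D → Bool) (p : S → ℝ)
    (i : S) (t : DT S D) (hit : i ∉ t.svars) :
    (∑ τ : S → Bool, if t.bval σ τ then ∏ j, (if τ j then p j else 1 - p j) else 0)
      = ∑ g : {j // j ≠ i} → Bool,
          (if t.bval σ ((Equiv.funSplitAt i Bool).symm (true, g)) then
            ∏ j ∈ Finset.univ.erase i,
              (if ((Equiv.funSplitAt i Bool).symm (true, g)) j then p j else 1 - p j)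
           else 0) := by
  set E := (Equiv.funSplitAt i Bool)
  rw [← Equiv.sum_comp E.symm]
  rw [Fintype.sum_prod_type]
  have hext : ∀ (b : Bool) (g : {j // j ≠ i} → Bool) (j : S) (hj : j ≠ i),
      E.symm (b, g) j = g ⟨j, hj⟩ := by
    intro b g j hj; simp [E, Equiv.funSplitAt_symm_apply, hj]
  have hexti : ∀ (b : Bool) (g : {j // j ≠ i} → Bool), E.symm (b, g) i = b := by
    intro b g; simp [E, Equiv.funSplitAt_symm_apply]
  have hbval : ∀ (b : Bool) (g : {j // j ≠ i} → Bool),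
      t.bval σ (E.symm (b, g)) = t.bval σ (E.symm (true, g)) := by
    intro b g
    refine DT.bval_eq_of_agree σ t fun j hj => ?_
    have hji : j ≠ i := fun h => hit (h ▸ hj)
    rw [hext b g j hji, hext true g j hji]
  have hprod : ∀ (b : Bool) (g : {j // j ≠ i} → Bool),
      (∏ j ∈ Finset.univ.erase i, (if E.symm (b, g) j then p j else 1 - p j))
        = ∏ j ∈ Finset.univ.erase i, (if E.symm (true, g) j then p j else 1 - p j) := by
    intro b g
    refine Finset.prod_congr rfl fun j hj => ?_
    have hji : j ≠ i := (Finset.mem_erase.mp hj).1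
    rw [hext b g j hji, hext true g j hji]
  have hfull : ∀ (b : Bool) (g : {j // j ≠ i} → Bool),
      (∏ j, (if E.symm (b, g) j then p j else 1 - p j))
        = (if b then p i else 1 - p i) *
          ∏ j ∈ Finset.univ.erase i, (if E.symm (true, g) j then p j else 1 - p j) := by
    intro b g
    rw [← Finset.mul_prod_erase Finset.univ _ (Finset.mem_univ i), hexti, hprod]
  rw [Fintype.sum_bool]
  simp only [hfull, hbval]
  rw [← Finset.sum_add_distrib]
  refine Finset.sum_congr rfl fun g _ => ?_
  by_cases h : t.bval σ (E.symm (true, g)) = true <;> simp [h, -Equiv.funSplitAt_symm_apply] <;> ring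

lemma DT.sum_eq {S D : Type} [Fintype S] [DecidableEq S] (σ : D → Bool) (p : S → ℝ) :
    ∀ T : DT S D, T.readOnce →
      (∑ τ : S → Bool, if T.bval σ τ then ∏ i, (if τ i then p i else 1 - p i) else 0)
        = T.val σ p := by
  intro T
  induction T with
  | leaf b =>
    intro _
    cases b
    · simp [DT.bval, DT.val]
    · simp only [DT.bval, if_true, DT.val]
      rw [← Fintype.prod_sum (fun i (b : Bool) => if b = true then p i else 1 - p i)]
      have h1 : ∀ i : S, (∑ b : Bool, (if b = true then p i else 1 - p i)) = 1 := by
        intro i; rw [Fintype.sum_bool]; ring_nf; simp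
      simp [h1]
  | snode i hi lo ihh ihl =>
    rintro ⟨hih, hil, hrh, hrl⟩
    set E := (Equiv.funSplitAt i Bool)
    have hh := (DT.split_sum σ p i hi hih).symm.trans (ihh hrh)
    have hl := (DT.split_sum σ p i lo hil).symm.trans (ihl hrl)
    rw [show (DT.snode i hi lo).val σ p = p i * hi.val σ p + (1 - p i) * lo.val σ p from rfl,
      ← hh, ← hl]
    rw [← Equiv.sum_comp E.symm, Fintype.sum_prod_type, Fintype.sum_bool]
    have hexti : ∀ (b : Bool) (g : {j // j ≠ i} → Bool), E.symm (b, g) i = b := by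
      intro b g; simp [E, Equiv.funSplitAt_symm_apply]
    have hext : ∀ (b : Bool) (g : {j // j ≠ i} → Bool) (j : S) (hj : j ≠ i),
        E.symm (b, g) j = g ⟨j, hj⟩ := by
      intro b g j hj; simp [E, Equiv.funSplitAt_symm_apply, hj]
    have hprod : ∀ (b : Bool) (g : {j // j ≠ i} → Bool),
        (∏ j ∈ Finset.univ.erase i, (if E.symm (b, g) j then p j else 1 - p j))
          = ∏ j ∈ Finset.univ.erase i, (if E.symm (true, g) j then p j else 1 - p j) := by
      intro b g
      refine Finset.prod_congr rfl fun j hj => ?_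
      have hji : j ≠ i := (Finset.mem_erase.mp hj).1
      rw [hext b g j hji, hext true g j hji]
    have hfull : ∀ (b : Bool) (g : {j // j ≠ i} → Bool),
        (∏ j, (if E.symm (b, g) j then p j else 1 - p j))
          = (if b then p i else 1 - p i) *
            ∏ j ∈ Finset.univ.erase i, (if E.symm (true, g) j then p j else 1 - p j) := by
      intro b g
      rw [← Finset.mul_prod_erase Finset.univ _ (Finset.mem_univ i), hexti, hprod]
    have hbh : ∀ (b : Bool) (g : {j // j ≠ i} → Bool),
        hi.bval σ (E.symm (b, g)) = hi.bval σ (E.symm (true, g)) := by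
      intro b g
      refine DT.bval_eq_of_agree σ hi fun j hj => ?_
      have hji : j ≠ i := fun h => hih (h ▸ hj)
      rw [hext b g j hji, hext true g j hji]
    have hbl : ∀ (b : Bool) (g : {j // j ≠ i} → Bool),
        lo.bval σ (E.symm (b, g)) = lo.bval σ (E.symm (true, g)) := by
      intro b g
      refine DT.bval_eq_of_agree σ lo fun j hj => ?_
      have hji : j ≠ i := fun h => hil (h ▸ hj)
      rw [hext b g j hji, hext true g j hji]
    have hbv : ∀ (b : Bool) (g : {j // j ≠ i} → Bool),
        (DT.snode i hi lo).bval σ (E.symm (b, g))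
          = if b then hi.bval σ (E.symm (b, g)) else lo.bval σ (E.symm (b, g)) := by
      intro b g
      simp [DT.bval, hexti]
    simp only [hbv, hfull, hbh, hbl]
    rw [Finset.mul_sum, Finset.mul_sum, ← Finset.sum_add_distrib, ← Finset.sum_add_distrib]
    refine Finset.sum_congr rfl fun g _ => ?_
    by_cases h1 : hi.bval σ (E.symm (true, g)) = true <;>
      by_cases h2 : lo.bval σ (E.symm (true, g)) = true <;> simp [E, h1, h2, -Equiv.funSplitAt_symm_apply] <;> ring
  | dnode j hi lo ihh ihl =>
    rintro ⟨hrh, hrl⟩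
    cases hσ : σ j <;> simp only [DT.bval, DT.val, hσ] <;>
      simp only [Bool.false_eq_true, ite_false, ite_true]
    · exact ihl hrl
    · exact ihh hrh

/-- If each stochastic variable `t_i` is independently true with probability
`p_i` (product of Bernoulli measures on `Bool^S`), then the OBDD evaluation
`v(root)` equals the probability `P(φ = ⊤ | σ)`, i.e. the measure of the set
of samples making the represented formula true under the strategy `σ`. -/
theorem DT.val_eq_probability {S D : Type} [Fintype S] [DecidableEq S]
    (T : DT S D) (σ : D → Bool) (p : S → ℝ)
    (hp : ∀ i, 0 ≤ p i ∧ p i ≤ 1) (hro : T.readOnce) :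
    MeasureTheory.Measure.pi
        (fun i : S =>
          (PMF.bernoulli (Real.toNNReal (p i))
            (Real.toNNReal_le_one.mpr (hp i).2)).toMeasure)
        {τ : S → Bool | T.bval σ τ = true} =
      ENNReal.ofReal (T.val σ p) := by
  classical
  set ν := fun i : S =>
    (PMF.bernoulli (Real.toNNReal (p i)) (Real.toNNReal_le_one.mpr (hp i).2)).toMeasure with hν
  have hsing : ∀ τ : S → Bool, MeasurableSet ({τ} : Set (S → Bool)) := by
    intro τ
    rw [← Set.univ_pi_singleton]
    exact MeasurableSet.univ_pi fun i => measurableSet_singleton (τ i)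
  have hμs : ∀ τ : S → Bool,
      MeasureTheory.Measure.pi ν {τ} = ∏ i, ν i {τ i} := by
    intro τ
    rw [← Set.univ_pi_singleton τ, MeasureTheory.Measure.pi_pi]
  have hνb : ∀ (i : S) (b : Bool),
      ν i {b} = ENNReal.ofReal (if b = true then p i else 1 - p i) := by
    intro i b
    rw [hν]
    rw [PMF.toMeasure_apply_singleton _ _ (measurableSet_singleton b), PMF.bernoulli_apply]
    cases b
    · simp only [Bool.cond_false, Bool.false_eq_true, ite_false]
      rw [ENNReal.ofReal_sub 1 (hp i).1, ENNReal.ofReal_one]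
      simp [ENNReal.ofReal]
    · simp
      rfl
  have hA : {τ : S → Bool | T.bval σ τ = true}
      = ⋃ τ ∈ (Finset.univ.filter (fun τ : S → Bool => T.bval σ τ = true)),
          ({τ} : Set (S → Bool)) := by
    ext τ; simp
  rw [hA, MeasureTheory.measure_biUnion_finset ?_ (fun τ _ => hsing τ)]
  · have key : ∀ τ : S → Bool,
        MeasureTheory.Measure.pi ν {τ}
          = ENNReal.ofReal (∏ i, (if τ i = true then p i else 1 - p i)) := by
      intro τ
      rw [hμs]
      rw [ENNReal.ofReal_prod_of_nonneg]
      · exact Finset.prod_congr rfl fun i _ => hνb i (τ i)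
      · intro i _
        rcases hp i with ⟨h0, h1⟩
        by_cases hb : τ i = true <;> simp [hb] <;> linarith
    simp only [key]
    rw [← ENNReal.ofReal_sum_of_nonneg]
    · congr 1
      rw [Finset.sum_filter]
      exact DT.sum_eq σ p T hro
    · intro τ _
      refine Finset.prod_nonneg fun i _ => ?_
      rcases hp i with ⟨h0, h1⟩
      by_cases hb : τ i = true <;> simp [hb] <;> linarith
  · intro τ _ τ' _ hne
    simp [Function.onFun, Set.disjoint_singleton, hne]
end

section
/- The path-weight invariant of the top-down pass: after processing all nodes of levels < m in topological order in Algorithm 1, the accumulated quantity at each node r of level m equals the path weight π(r) as defined by the sum-over-valid-paths formula. -/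
/-!
A layered ordered decision diagram. Levels are indexed from the leaves upward:
level `0` consists of the leaves, level `i+1` consists of `k (i+1)` nodes, all
labeled with the same variable, whose hi- and lo-arcs point to nodes of level
`i`; the root is the unique node at level `n`. The arc weights are given per
level: `wh i` for the hi arc and `wl i` for the lo arc out of a node of level
`i`. (For a stochastic variable `wh i = w i` and `wl i = 1 - w i`; for a
decision variable that is true or free `wh i = 1` and `wl i = 0`, and for one
that is false `wh i = 0` and `wl i = 1`: invalid arcs carry weight `0`, so only
valid paths contribute.)
-/

/-- The accumulated quantity computed by the top-down pass of Algorithm 1: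
`π(root) = 1`, and each node in topological order adds `π(r)·(arc weight)` to
each of its children. -/
def pwAlg (n : ℕ) (k : ℕ → ℕ) (hi lo : ∀ i, Fin (k (i + 1)) → Fin (k i))
    (wh wl : ℕ → ℝ) (i : ℕ) (j : Fin (k i)) : ℝ :=
  if h : i < n then
    ∑ j' : Fin (k (i + 1)),
      ((if hi i j' = j then wh (i + 1) else 0) +
        (if lo i j' = j then wl (i + 1) else 0)) * pwAlg n k hi lo wh wl (i + 1) j'
  else 1
termination_by n - i

/-- The node of level `n - t` reached from the root by following, for `t` steps,
the hi arc where `b` is true and the lo arc where `b` is false. -/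
def walk (n : ℕ) (k : ℕ → ℕ) (hi lo : ∀ i, Fin (k (i + 1)) → Fin (k i))
    (root : Fin (k n)) (b : ℕ → Bool) : (t : ℕ) → t ≤ n → Fin (k (n - t))
  | 0, _ => root
  | t + 1, h =>
      let j : Fin (k ((n - (t + 1)) + 1)) :=
        cast (congrArg (fun z => Fin (k z)) (by omega : n - t = (n - (t + 1)) + 1))
          (walk n k hi lo root b t (Nat.le_of_succ_le h))
      if b t then hi (n - (t + 1)) j else lo (n - (t + 1)) j

/-- The weight of the root-to-node path determined by the choices `b`, followed
for `t` steps from the root: the product of the traversed arc weights. -/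
def pathWeight (n : ℕ) (wh wl : ℕ → ℝ) (b : ℕ → Bool) (t : ℕ) : ℝ :=
  ∏ s ∈ Finset.range t, (if b s then wh (n - s) else wl (n - s))

lemma castk_val {k : ℕ → ℕ} {a b : ℕ} (e : a = b) (x : Fin (k a)) :
    (cast (congrArg (fun z => Fin (k z)) e) x).val = x.val := by subst e; rfl

lemma cast_comm_eq {k : ℕ → ℕ} {a b : ℕ} (e : a = b) (e' : b = a)
    (x : Fin (k a)) (y : Fin (k b)) :
    (x = cast (congrArg (fun z => Fin (k z)) e') y) ↔
      (cast (congrArg (fun z => Fin (k z)) e) x = y) := by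
  subst e
  exact Iff.rfl

lemma walk_congr (n : ℕ) (k : ℕ → ℕ) (hi lo : ∀ i, Fin (k (i + 1)) → Fin (k i))
    (root : Fin (k n)) {b b' : ℕ → Bool} (t : ℕ) (h : t ≤ n)
    (hbb : ∀ s < t, b s = b' s) :
    walk n k hi lo root b t h = walk n k hi lo root b' t h := by
  induction t with
  | zero => rfl
  | succ t ih =>
      simp only [walk]
      rw [ih (Nat.le_of_succ_le h) (fun s hs => hbb s (by omega)), hbb t (by omega)]

lemma pathWeight_congr (n : ℕ) (wh wl : ℕ → ℝ) {b b' : ℕ → Bool} (t : ℕ)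
    (hbb : ∀ s < t, b s = b' s) :
    pathWeight n wh wl b t = pathWeight n wh wl b' t :=
  Finset.prod_congr rfl fun s hs => by rw [hbb s (Finset.mem_range.mp hs)]

def boolSplit (d : ℕ) : ((Fin d → Bool) × Bool) ≃ (Fin (d + 1) → Bool) where
  toFun p := fun s => if h : (s : ℕ) < d then p.1 ⟨s, h⟩ else p.2
  invFun f := (fun s => f s.castSucc, f (Fin.last d))
  left_inv p := by
    ext s
    · simp [Fin.castSucc, Fin.castAdd, Fin.castLE]
    · simp
  right_inv f := by
    funext s
    rcases s with ⟨s, hs⟩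
    by_cases h : s < d
    · simp [h, Fin.castSucc, Fin.castAdd, Fin.castLE]
    · have : s = d := by omega
      subst this
      simp [h, Fin.last]


lemma key (n : ℕ) (k : ℕ → ℕ) (hi lo : ∀ i, Fin (k (i + 1)) → Fin (k i))
    (wh wl : ℕ → ℝ) (hroot : k n = 1) (root : Fin (k n)) (d : ℕ) :
    ∀ m (hm : m ≤ n) (hd : n - m = d) (r : Fin (k m)),
      pwAlg n k hi lo wh wl m r =
        ∑ b : Fin d → Bool,
          if walk n k hi lo root (fun s => if hs : s < d then b ⟨s, hs⟩ else false)
                d (by omega) =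
              cast (congrArg (fun z => Fin (k z)) (by omega : m = n - d)) r then
            pathWeight n wh wl (fun s => if hs : s < d then b ⟨s, hs⟩ else false) d
          else 0 := by
  induction d with
  | zero =>
      intro m hm hd r
      have hmn : m = n := by omega
      subst hmn
      rw [pwAlg, dif_neg (lt_irrefl m)]
      have hc : ∀ b : Fin 0 → Bool,
          (if walk m k hi lo root (fun s => if hs : s < 0 then b ⟨s, hs⟩ else false)
                0 (by omega) =
              cast (congrArg (fun z => Fin (k z)) (by omega : m = m - 0)) r then
            pathWeight m wh wl (fun s => if hs : s < 0 then b ⟨s, hs⟩ else false) 0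
          else 0) = 1 := by
        intro b
        rw [if_pos, pathWeight]
        · simp
        · apply Fin.val_injective
          rw [castk_val (by omega : m = m - 0) r]
          have h1 : walk m k hi lo root
              (fun s => if hs : s < 0 then b ⟨s, hs⟩ else false) 0 (by omega) = root := rfl
          rw [h1]
          have := root.isLt
          have := r.isLt
          omega
      rw [Finset.sum_congr rfl (fun b _ => hc b)]
      simp
  | succ d ih =>
      intro m hm hd r
      have hmn : m = n - (d + 1) := by omega
      subst hmn
      have hlt : n - (d + 1) < n := by omega
      have hE : n - d = n - (d + 1) + 1 := by omega
      rw [pwAlg, dif_pos hlt]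
      have step1 : ∀ j' : Fin (k (n - (d + 1) + 1)),
          pwAlg n k hi lo wh wl (n - (d + 1) + 1) j' =
            ∑ b0 : Fin d → Bool,
              if walk n k hi lo root (fun s => if hs : s < d then b0 ⟨s, hs⟩ else false)
                    d (by omega) =
                  cast (congrArg (fun z => Fin (k z)) (by omega : n - (d+1) + 1 = n - d)) j' then
                pathWeight n wh wl (fun s => if hs : s < d then b0 ⟨s, hs⟩ else false) d
              else 0 := fun j' => ih (n - (d + 1) + 1) (by omega) (by omega) j'
      simp only [step1]
      simp only [Finset.mul_sum]
      rw [Finset.sum_comm]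
      simp only [mul_ite, mul_zero]
      simp only [cast_comm_eq hE (by omega : n - (d+1) + 1 = n - d)]
      simp only [Finset.sum_ite_eq, Finset.mem_univ, if_true]
      rw [← Equiv.sum_comp (boolSplit d)]
      rw [Fintype.sum_prod_type]
      apply Finset.sum_congr rfl
      intro b0 _
      rw [Fintype.sum_bool]
      have hsplit : ∀ (c : Bool) (s : ℕ) (hs : s < d + 1),
          (boolSplit d) (b0, c) ⟨s, hs⟩ = if h : s < d then b0 ⟨s, h⟩ else c := by
        intro c s hs
        simp [boolSplit]
      have hext : ∀ c : Bool, ∀ s < d,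
          (fun s => if hs : s < d + 1 then (boolSplit d) (b0, c) ⟨s, hs⟩ else false) s =
            (fun s => if hs : s < d then b0 ⟨s, hs⟩ else false) s := by
        intro c s hs
        show (if hs : s < d + 1 then (boolSplit d) (b0, c) ⟨s, hs⟩ else false) =
          (if hs : s < d then b0 ⟨s, hs⟩ else false)
        rw [dif_pos (by omega : s < d + 1), hsplit, dif_pos hs, dif_pos hs]
      have hextd : ∀ c : Bool,
          (if hs : d < d + 1 then (boolSplit d) (b0, c) ⟨d, hs⟩ else false) = c := by
        intro c
        rw [dif_pos (by omega : d < d + 1), hsplit, dif_neg (lt_irrefl d)]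
      have hPW : ∀ c : Bool,
          pathWeight n wh wl
              (fun s => if hs : s < d + 1 then (boolSplit d) (b0, c) ⟨s, hs⟩ else false) (d + 1) =
            pathWeight n wh wl (fun s => if hs : s < d then b0 ⟨s, hs⟩ else false) d *
              (if c then wh (n - (d + 1) + 1) else wl (n - (d + 1) + 1)) := by
        intro c
        rw [pathWeight, Finset.prod_range_succ,
          ← pathWeight, pathWeight_congr n wh wl d (hext c), hextd c,
          show wh (n - d) = wh (n - (d + 1) + 1) from congrArg wh hE,
          show wl (n - d) = wl (n - (d + 1) + 1) from congrArg wl hE]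
      have hWalk : ∀ c : Bool,
          walk n k hi lo root
              (fun s => if hs : s < d + 1 then (boolSplit d) (b0, c) ⟨s, hs⟩ else false) (d + 1)
              (by omega) =
            (if c then
              hi (n - (d + 1)) (cast (congrArg (fun z => Fin (k z)) hE)
                (walk n k hi lo root (fun s => if hs : s < d then b0 ⟨s, hs⟩ else false) d
                  (by omega)))
            else
              lo (n - (d + 1)) (cast (congrArg (fun z => Fin (k z)) hE)
                (walk n k hi lo root (fun s => if hs : s < d then b0 ⟨s, hs⟩ else false) d
                  (by omega)))) := by
        intro c
        simp only [walk]
        simp only [hextd c]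
        rw [walk_congr n k hi lo root d (by omega) (hext c)]
      rw [hWalk, hWalk, hPW, hPW, cast_eq]
      simp only [if_pos rfl, Bool.false_eq_true, if_false]
      split_ifs <;> first | ring | (exact absurd ‹_› ‹_›)

/-- Invariant of the top-down pass of Algorithm 1: after processing all levels
above level `m` in topological order, the accumulated quantity at each node `r`
of level `m` equals the path weight `π(r)` given by the sum-over-paths formula:
the sum, over all root-to-`r` paths, of the products of the arc weights. -/
theorem pwAlg_eq_sum_over_paths (n : ℕ) (k : ℕ → ℕ)
    (hi lo : ∀ i, Fin (k (i + 1)) → Fin (k i)) (wh wl : ℕ → ℝ)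
    (hroot : k n = 1) (root : Fin (k n)) (m : ℕ) (hm : m ≤ n) (r : Fin (k m)) :
    pwAlg n k hi lo wh wl m r =
      ∑ b : Fin (n - m) → Bool,
        if walk n k hi lo root (fun s => if hs : s < n - m then b ⟨s, hs⟩ else false)
              (n - m) (Nat.sub_le n m) =
            cast (congrArg (fun z => Fin (k z)) (by omega : m = n - (n - m))) r then
          pathWeight n wh wl (fun s => if hs : s < n - m then b ⟨s, hs⟩ else false) (n - m)
        else 0 :=
  key n k hi lo wh wl hroot root (n - m) m hm rfl r
end
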